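/- Let G be a non-empty connected finite simple graph with chromatic polynomial χ_G and chromatic number k. Let p be a prime that divides neither χ_G(k) nor the coefficient of x in χ_G, and let M = k + p. Let f ∈ ℚ[q] be the polynomial obtained from X_G(x_1,…,x_M) by setting x_1 = ⋯ = x_k = q and x_{k+1} = ⋯ = x_{k+p} = 1. Then f is irreducible in ℚ[q]. -/

import Mathlib

set_option linter.unusedSectionVars false
set_option linter.unusedVariables false
set_option linter.unnecessarySimpa false

open MvPolynomial

attribute [local instance 10] Classical.propDecidable

/-- The finset of proper colorings of `G` with color set `Fin C`. -/
noncomputable def properColorings {V : Type} [Fintype V] (G : SimpleGraph V) (C : ℕ) :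
    Finset (V → Fin C) :=
  Finset.univ.filter fun κ => ∀ u w, G.Adj u w → κ u ≠ κ w

/-- The number of proper colorings of `G` using `m` available colors. -/
noncomputable def ncol {V : Type} [Fintype V] (G : SimpleGraph V) (m : ℕ) : ℕ :=
  (properColorings G m).card

/-- Chromatic symmetric polynomial of `G` with `C` colors, one variable per color. -/
noncomputable def XG {V : Type} [Fintype V] (G : SimpleGraph V) (C : ℕ) :
    MvPolynomial (Fin C) ℚ :=
  ∑ κ ∈ properColorings G C, ∏ v : V, X (κ v)

section Shift

variable {k p : ℕ}

/-- shift a single color -/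
def shc (hp : 0 < p) (c : ℕ) (a : Fin (k + p)) : Fin (k + p) :=
  if (a : ℕ) < k then a
  else ⟨k + (((a : ℕ) - k + c) % p), by have := Nat.mod_lt ((a : ℕ) - k + c) hp; omega⟩

lemma shc_low (hp : 0 < p) (c : ℕ) (a : Fin (k + p)) :
    ((shc hp c a : ℕ) < k) ↔ ((a : ℕ) < k) := by
  unfold shc
  by_cases h : (a : ℕ) < k <;> simp [h]

lemma shc_shc (hp : 0 < p) (c c' : ℕ) (a : Fin (k + p)) :
    shc hp c (shc hp c' a) = shc hp (c' + c) a := by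
  by_cases h : (a : ℕ) < k
  · simp [shc, h]
  · have h1 : ¬ ((shc hp c' a : ℕ) < k) := by rw [shc_low]; exact h
    apply Fin.ext
    simp only [shc, if_neg h]
    rw [if_neg (show ¬ k + ((a : ℕ) - k + c') % p < k by omega)]
    simp only [Fin.val_mk]
    congr 1
    rw [show k + ((a : ℕ) - k + c') % p - k + c = ((a : ℕ) - k + c') % p + c from by omega,
      Nat.mod_add_mod, Nat.add_assoc]

lemma shc_p (hp : 0 < p) (a : Fin (k + p)) : shc hp p a = a := by
  by_cases h : (a : ℕ) < k
  · simp [shc, h]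
  · have hv := a.isLt
    apply Fin.ext
    simp only [shc, if_neg h]
    rw [Nat.add_mod_right, Nat.mod_eq_of_lt (by omega)]
    omega

lemma shc_inj (hp : 0 < p) (c : ℕ) (hc : c ≤ p) {a b : Fin (k + p)} :
    shc hp c a = shc hp c b → a = b := by
  intro h
  have := congrArg (shc hp (p - c)) h
  rwa [shc_shc, shc_shc, (by omega : c + (p - c) = p), shc_p, shc_p] at this

end Shift


section Count

variable {V : Type} [Fintype V] [Nonempty V] (G : SimpleGraph V) {k p : ℕ}

/-- number of "low"-colored vertices -/
noncomputable def dlow (k : ℕ) {M : ℕ} (κ : V → Fin M) : ℕ :=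
  (Finset.univ.filter fun v : V => (κ v : ℕ) < k).card

lemma mem_pc {C : ℕ} {κ : V → Fin C} :
    κ ∈ properColorings G C ↔ ∀ u w, G.Adj u w → κ u ≠ κ w := by
  simp [properColorings]

lemma shf_mem_pc (hp : 0 < p) {c : ℕ} (hc : c ≤ p) {κ : V → Fin (k + p)}
    (hκ : κ ∈ properColorings G (k + p)) :
    (fun v => shc hp c (κ v)) ∈ properColorings G (k + p) := by
  rw [mem_pc] at hκ ⊢
  intro u w h hcon
  exact hκ u w h (shc_inj hp c hc hcon)

lemma dlow_shf (hp : 0 < p) (c : ℕ) (κ : V → Fin (k + p)) :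
    dlow k (fun v => shc hp c (κ v)) = dlow k κ := by
  unfold dlow
  congr 1
  apply Finset.filter_congr
  intro v _
  simp [shc_low]

/-- selection of a canonical element, via choice -/
noncomputable def vsel {V : Type} [Nonempty V] (S : Finset V) : V :=
  if h : S.Nonempty then h.choose else Classical.arbitrary V

lemma vsel_mem {V : Type} [Nonempty V] {S : Finset V} (h : S.Nonempty) : vsel S ∈ S := by
  simp only [vsel, dif_pos h]; exact h.choose_spec

/-- the high set of a coloring -/
noncomputable def hiset (k : ℕ) {V : Type} [Fintype V] {M : ℕ} (κ : V → Fin M) : Finset V :=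
  Finset.univ.filter fun v => ¬ (κ v : ℕ) < k

/-- canonical high vertex -/
noncomputable def vsig (k : ℕ) {V : Type} [Fintype V] [Nonempty V] {M : ℕ}
    (κ : V → Fin M) : V := vsel (hiset k κ)

lemma hiset_card {V : Type} [Fintype V] (k : ℕ) {M : ℕ} (κ : V → Fin M) :
    (hiset k κ).card = Fintype.card V - dlow k κ := by
  have := Finset.card_filter_add_card_filter_not
    (s := (Finset.univ : Finset V)) (p := fun v => (κ v : ℕ) < k)
  simp only [Finset.card_univ] at this
  unfold dlow hiset
  omega

lemma hiset_shf {V : Type} [Fintype V] {k p : ℕ} (hp : 0 < p) (c : ℕ) (κ : V → Fin (k + p)) :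
    hiset k (fun v => shc hp c (κ v)) = hiset k κ := by
  unfold hiset
  apply Finset.filter_congr
  intro v _
  simp [shc_low]

lemma vsig_shf {V : Type} [Fintype V] [Nonempty V] {k p : ℕ} (hp : 0 < p) (c : ℕ)
    (κ : V → Fin (k + p)) : vsig k (fun v => shc hp c (κ v)) = vsig k κ := by
  unfold vsig; rw [hiset_shf]

lemma shift_dvd (hp : 0 < p) {j : ℕ} (hj : j < Fintype.card V) :
    p ∣ ((properColorings G (k + p)).filter (fun κ => dlow k κ = j)).card := by
  classical
  set T := (properColorings G (k + p)).filter (fun κ => dlow k κ = j) with hT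
  have hiset_ne : ∀ κ ∈ T, (hiset k κ).Nonempty := by
    intro κ hκ
    rw [hT, Finset.mem_filter] at hκ
    rw [← Finset.card_pos, hiset_card, hκ.2]
    omega
  have hi_high : ∀ κ ∈ T, ¬ ((κ (vsig k κ) : ℕ) < k) := by
    intro κ hκ
    have := vsel_mem (hiset_ne κ hκ)
    simp only [hiset, Finset.mem_filter] at this
    exact this.2
  have hmemT : ∀ (c : ℕ), c ≤ p → ∀ κ ∈ T, (fun v => shc hp c (κ v)) ∈ T := by
    intro c hc κ hκ
    rw [hT, Finset.mem_filter] at hκ ⊢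
    exact ⟨shf_mem_pc G hp hc hκ.1, by rw [dlow_shf]; exact hκ.2⟩
  set T₀ := T.filter (fun κ => (κ (vsig k κ) : ℕ) = k) with hT₀
  have hval : ∀ μ ∈ T, k ≤ (μ (vsig k μ) : ℕ) ∧ (μ (vsig k μ) : ℕ) - k < p := by
    intro μ hμ
    have h1 := hi_high μ hμ
    have h2 := (μ (vsig k μ)).isLt
    omega
  set cval : (V → Fin (k + p)) → ℕ := fun μ => ((μ (vsig k μ) : ℕ) - k) % p with hcval
  have cval_lt : ∀ μ, cval μ < p := fun μ => Nat.mod_lt _ hp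
  have cval_eq : ∀ μ ∈ T, cval μ = (μ (vsig k μ) : ℕ) - k := by
    intro μ hμ
    exact Nat.mod_eq_of_lt (hval μ hμ).2
  have key : ((Finset.univ : Finset (Fin p)) ×ˢ T₀).card = T.card := by
    refine Finset.card_nbij'
      (i := fun x : Fin p × (V → Fin (k + p)) => fun v => shc hp (x.1 : ℕ) (x.2 v))
      (j := fun μ => (⟨cval μ, cval_lt μ⟩, fun v => shc hp (p - cval μ) (μ v))) ?_ ?_ ?_ ?_
    · rintro ⟨c, κ⟩ hx
      simp only [Finset.mem_coe, Finset.mem_product, Finset.mem_univ, true_and] at hx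
      rw [hT₀, Finset.mem_filter] at hx
      exact hmemT (c : ℕ) (le_of_lt c.isLt) κ hx.1
    · intro μ hμ
      simp only [Finset.mem_coe, Finset.mem_product, Finset.mem_univ, true_and]
      have hcp := (hval μ hμ).2
      have hkle := (hval μ hμ).1
      rw [hT₀, Finset.mem_filter]
      have hmem : (fun v => shc hp (p - cval μ) (μ v)) ∈ T :=
        hmemT _ (by omega) μ hμ
      refine ⟨hmem, ?_⟩
      rw [vsig_shf]
      simp only []
      rw [shc, if_neg (hi_high μ hμ)]
      simp only [Fin.val_mk]
      rw [cval_eq μ hμ]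
      rw [show (μ (vsig k μ) : ℕ) - k + (p - ((μ (vsig k μ) : ℕ) - k)) = p from by omega,
        Nat.mod_self, Nat.add_zero]
    · rintro ⟨c, κ⟩ hx
      simp only [Finset.mem_coe, Finset.mem_product, Finset.mem_univ, true_and] at hx
      rw [hT₀, Finset.mem_filter] at hx
      obtain ⟨hκT, hκ0⟩ := hx
      have hκT' : (fun v => shc hp (c : ℕ) (κ v)) ∈ T := hmemT _ (le_of_lt c.isLt) κ hκT
      have h1 : vsig k (fun v => shc hp (c : ℕ) (κ v)) = vsig k κ := vsig_shf hp _ κ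
      have h2 : (shc hp (c : ℕ) (κ (vsig k κ)) : ℕ) = k + (c : ℕ) := by
        rw [shc, if_neg (by omega : ¬ (κ (vsig k κ) : ℕ) < k)]
        simp only [Fin.val_mk]
        rw [hκ0, Nat.sub_self, Nat.zero_add, Nat.mod_eq_of_lt c.isLt]
      have hcv : cval (fun v => shc hp (c : ℕ) (κ v)) = (c : ℕ) := by
        rw [hcval]
        simp only [h1, h2]
        rw [show k + (c : ℕ) - k = (c : ℕ) from by omega, Nat.mod_eq_of_lt c.isLt]
      ext
      · simp only [hcv]
      · rename_i v
        simp only [hcv]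
        rw [shc_shc, show (c : ℕ) + (p - (c : ℕ)) = p from by omega, shc_p]
    · intro μ hμ
      funext v
      have := cval_lt μ
      simp only []
      rw [shc_shc, show (p - cval μ) + cval μ = p from by omega, shc_p]
  have : T.card = p * T₀.card := by
    rw [← key, Finset.card_product, Finset.card_univ, Fintype.card_fin]
  exact ⟨T₀.card, this⟩

end Count

section Count2

variable {V : Type} [Fintype V] [Nonempty V] (G : SimpleGraph V) {k p : ℕ}

lemma pc_card_cast (m m' : ℕ) (h : m = m') : ncol G m = ncol G m' := by subst h; rfl

lemma ncol_dvd {m : ℕ} (hm : 0 < m) : m ∣ ncol G m := by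
  have h := shift_dvd G (k := 0) hm (j := 0) Fintype.card_pos
  have h2 : ((properColorings G (0 + m)).filter (fun κ => dlow 0 κ = 0))
      = properColorings G (0 + m) := by
    apply Finset.filter_true_of_mem
    intro κ _
    unfold dlow
    simp
  rw [h2] at h
  have h3 : (properColorings G (0 + m)).card = ncol G m := by
    unfold ncol
    apply Finset.card_nbij' (i := fun κ v => Fin.cast (Nat.zero_add m) (κ v))
      (j := fun κ v => Fin.cast (Nat.zero_add m).symm (κ v))
    · intro κ hκ
      rw [Finset.mem_coe, mem_pc] at hκ ⊢
      intro u w ha hc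
      exact hκ u w ha (Fin.cast_injective _ hc)
    · intro κ hκ
      rw [Finset.mem_coe, mem_pc] at hκ ⊢
      intro u w ha hc
      exact hκ u w ha (Fin.cast_injective _ hc)
    · intro κ _; funext v; ext; simp
    · intro κ _; funext v; ext; simp
  rwa [h3] at h

lemma card_Tn (hk : 0 < k) :
    ((properColorings G (k + p)).filter (fun κ => dlow k κ = Fintype.card V)).card
      = ncol G k := by
  have hmem : ∀ κ ∈ (properColorings G (k + p)).filter
      (fun κ => dlow k κ = Fintype.card V), ∀ v : V, (κ v : ℕ) < k := by
    intro κ hκ v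
    rw [Finset.mem_filter] at hκ
    have h2 : (Finset.univ.filter fun v : V => (κ v : ℕ) < k) = Finset.univ := by
      apply Finset.eq_univ_of_card
      rw [← Finset.card_univ] at hκ
      exact hκ.2
    have := Finset.mem_univ v
    rw [← h2, Finset.mem_filter] at this
    exact this.2
  unfold ncol
  refine Finset.card_bij'
    (i := fun κ hκ => fun v => (⟨(κ v : ℕ), hmem κ hκ v⟩ : Fin k))
    (j := fun κ _ => fun v => Fin.castLE (Nat.le_add_right k p) (κ v)) ?_ ?_ ?_ ?_
  · intro κ hκ
    rw [Finset.mem_filter, mem_pc] at hκ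
    rw [mem_pc]
    intro u w ha hc
    refine hκ.1 u w ha ?_
    have hcv := congrArg Fin.val hc
    simp only [Fin.val_mk] at hcv
    exact Fin.ext hcv
  · intro κ hκ
    rw [mem_pc] at hκ
    rw [Finset.mem_filter, mem_pc]
    constructor
    · intro u w ha hc
      exact hκ u w ha (Fin.castLE_injective _ hc)
    · unfold dlow
      rw [← Finset.card_univ]
      congr 1
      apply Finset.eq_univ_of_forall
      intro v
      rw [Finset.mem_filter]
      exact ⟨Finset.mem_univ v, by simpa using (κ v).isLt⟩
  · intro κ _; funext v; ext; simp
  · intro κ _; funext v; ext; simp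

lemma card_T0 :
    ((properColorings G (k + p)).filter (fun κ => dlow k κ = 0)).card = ncol G p := by
  have hmem : ∀ κ ∈ (properColorings G (k + p)).filter
      (fun κ => dlow k κ = 0), ∀ v : V, k ≤ (κ v : ℕ) := by
    intro κ hκ v
    rw [Finset.mem_filter] at hκ
    have h2 := hκ.2
    unfold dlow at h2
    rw [Finset.card_eq_zero] at h2
    by_contra hcon
    have : v ∈ Finset.univ.filter fun v : V => (κ v : ℕ) < k := by
      rw [Finset.mem_filter]; exact ⟨Finset.mem_univ v, by omega⟩
    rw [h2] at this
    exact absurd this (Finset.notMem_empty v)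
  unfold ncol
  refine Finset.card_bij'
    (i := fun κ hκ => fun v => (⟨(κ v : ℕ) - k, by
        have h1 := hmem κ hκ v; have h2 := (κ v).isLt; omega⟩ : Fin p))
    (j := fun κ _ => fun v => (⟨k + (κ v : ℕ), by have := (κ v).isLt; omega⟩ : Fin (k + p))) ?_ ?_ ?_ ?_
  · intro κ hκ
    have h0 := hmem κ hκ
    rw [Finset.mem_filter, mem_pc] at hκ
    rw [mem_pc]
    intro u w ha hc
    refine hκ.1 u w ha ?_
    have hcv : (κ u : ℕ) - k = (κ w : ℕ) - k := by simpa using congrArg Fin.val hc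
    have h1 := h0 u; have h2 := h0 w
    clear hc
    exact Fin.ext (by omega)
  · intro κ hκ
    rw [mem_pc] at hκ
    rw [Finset.mem_filter, mem_pc]
    constructor
    · intro u w ha hc
      refine hκ u w ha ?_
      have hcv : k + (κ u : ℕ) = k + (κ w : ℕ) := by simpa using congrArg Fin.val hc
      clear hc
      exact Fin.ext (by omega)
    · unfold dlow
      rw [Finset.card_eq_zero]
      apply Finset.filter_false_of_mem
      intro v _
      simp only [Fin.val_mk]
      omega
  · intro κ hκ
    have h0 := hmem κ hκ
    funext v
    refine Fin.ext ?_
    have := h0 v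
    simp only [Fin.val_mk]
    omega
  · intro κ _; funext v; exact Fin.ext (by simp)

end Count2


section Poly

variable {V : Type} [Fintype V] [Nonempty V] (G : SimpleGraph V) (k p : ℕ)

noncomputable def fint : Polynomial ℤ :=
  ∑ κ ∈ properColorings G (k + p), Polynomial.X ^ dlow k κ

lemma fint_coeff (j : ℕ) :
    (fint G k p).coeff j
      = (((properColorings G (k + p)).filter fun κ => dlow k κ = j).card : ℤ) := by
  classical
  unfold fint
  rw [Polynomial.finset_sum_coeff]
  have h1 : ∀ κ ∈ properColorings G (k + p),
      ((Polynomial.X : Polynomial ℤ) ^ dlow k κ).coeff j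
        = if dlow k κ = j then 1 else 0 := by
    intro κ _
    rw [Polynomial.coeff_X_pow]
    simp [eq_comm]
  rw [Finset.sum_congr rfl h1, Finset.sum_boole]

lemma aeval_XG_eq :
    (MvPolynomial.aeval
      (fun i : Fin (k + p) => if (i : ℕ) < k then Polynomial.X else (1 : Polynomial ℚ)))
      (XG G (k + p)) = (fint G k p).map (Int.castRingHom ℚ) := by
  classical
  unfold XG fint
  rw [map_sum, Polynomial.map_sum]
  apply Finset.sum_congr rfl
  intro κ _
  rw [Polynomial.map_pow, Polynomial.map_X]
  simp only [map_prod, MvPolynomial.aeval_X]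
  rw [Finset.prod_ite, Finset.prod_const, Finset.prod_const_one, mul_one]
  rfl

end Poly

/-- Let `G` be a non-empty connected graph with chromatic polynomial `χ` and chromatic
number `k`.  If `p` is a prime dividing neither `χ(k)` (the number of proper colorings
with `k` colors) nor the coefficient of `x` in `χ`, then the specialization of
`X_G(x_1,…,x_{k+p})` obtained by setting `x_1 = ⋯ = x_k = q` and
`x_{k+1} = ⋯ = x_{k+p} = 1` is irreducible in `ℚ[q]`. -/
theorem stmt5 {V : Type} [Fintype V] [Nonempty V] (G : SimpleGraph V) (hG : G.Connected)
    (χ : Polynomial ℤ) (hχ : ∀ m : ℕ, 0 < m → χ.eval (m : ℤ) = ncol G m)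
    (k : ℕ) (hkpos : 0 < k) (hk : 0 < ncol G k) (hkmin : ∀ j < k, ncol G j = 0)
    (p : ℕ) (hp : p.Prime) (hp1 : ¬ (p : ℤ) ∣ (ncol G k : ℤ)) (hp2 : ¬ (p : ℤ) ∣ χ.coeff 1) :
    Irreducible (MvPolynomial.aeval
      (fun i : Fin (k + p) => if (i : ℕ) < k then Polynomial.X else (1 : Polynomial ℚ))
      (XG G (k + p))) := by
  classical
  have hppos : 0 < p := hp.pos
  have hpZ : Prime (p : ℤ) := Nat.prime_iff_prime_int.mp hp
  set n := Fintype.card V with hn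
  have hnpos : 0 < n := Fintype.card_pos
  set f : Polynomial ℤ := fint G k p with hfdef
  -- coefficients of f
  have hcoeffn : f.coeff n = (ncol G k : ℤ) := by
    rw [hfdef, fint_coeff, card_Tn G hkpos]
  have hcoeff0 : f.coeff 0 = (ncol G p : ℤ) := by
    rw [hfdef, fint_coeff, card_T0 G]
  have hhigh : ∀ j, n < j → f.coeff j = 0 := by
    intro j hj
    rw [hfdef, fint_coeff]
    norm_cast
    rw [Finset.card_eq_zero]
    apply Finset.filter_false_of_mem
    intro κ _
    have : dlow k κ ≤ n := by
      unfold dlow; simpa using Finset.card_filter_le Finset.univ _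
    omega
  have hfne : f ≠ 0 := by
    intro h
    rw [h, Polynomial.coeff_zero] at hcoeffn
    have : (0 : ℤ) < (ncol G k : ℤ) := by exact_mod_cast hk
    omega
  have hdeg : f.natDegree = n := by
    apply le_antisymm
    · exact Polynomial.natDegree_le_iff_coeff_eq_zero.mpr fun m hm => hhigh m hm
    · apply Polynomial.le_natDegree_of_ne_zero
      rw [hcoeffn]
      have : (0 : ℤ) < (ncol G k : ℤ) := by exact_mod_cast hk
      omega
  have hmemp : ∀ j, j < n → (p : ℤ) ∣ f.coeff j := by
    intro j hj
    rw [hfdef, fint_coeff]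
    exact_mod_cast Int.natCast_dvd_natCast.mpr (shift_dvd G hppos hj)
  -- χ(0) = 0
  have hchi0 : χ.coeff 0 = 0 := by
    have hdvd_all : ∀ m : ℕ, 0 < m → (m : ℤ) ∣ χ.coeff 0 := by
      intro m hm
      have h1 : ((m : ℤ) - 0) ∣ χ.eval (m : ℤ) - χ.eval 0 :=
        Polynomial.sub_dvd_eval_sub _ _ _
      rw [sub_zero] at h1
      have h2 : (m : ℤ) ∣ χ.eval (m : ℤ) := by
        rw [hχ m hm]
        exact_mod_cast Int.natCast_dvd_natCast.mpr (ncol_dvd G hm)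
      rw [Polynomial.coeff_zero_eq_eval_zero]
      have : χ.eval 0 = χ.eval (m : ℤ) - (χ.eval (m : ℤ) - χ.eval 0) := by ring
      rw [this]
      exact dvd_sub h2 h1
    by_contra hc0
    have hpos : 0 < |χ.coeff 0| := abs_pos.mpr hc0
    have hd := hdvd_all ((χ.coeff 0).natAbs + 1) (by omega)
    have hd2 : (((χ.coeff 0).natAbs + 1 : ℕ) : ℤ) ∣ |χ.coeff 0| := (dvd_abs _ _).mpr hd
    have hle := Int.le_of_dvd hpos hd2
    rw [Int.abs_eq_natAbs] at hle
    push_cast at hle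
    omega
  -- p^2 does not divide ncol G p
  have hchip2 : ¬ (p : ℤ) ^ 2 ∣ (ncol G p : ℤ) := by
    rw [← hχ p hppos]
    intro hdvd
    have heval : χ.eval (p : ℤ)
        = ∑ i ∈ Finset.range (χ.natDegree + 2), χ.coeff i * (p : ℤ) ^ i :=
      Polynomial.eval_eq_sum_range' (by omega) _
    rw [Finset.sum_range_succ', Finset.sum_range_succ'] at heval
    simp only [Nat.zero_add, pow_zero, mul_one, pow_one] at heval
    rw [hchi0, add_zero] at heval
    have hsum : ((p : ℤ)) ^ 2 ∣ ∑ i ∈ Finset.range χ.natDegree,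
        χ.coeff (i + 1 + 1) * (p : ℤ) ^ (i + 1 + 1) := by
      apply Finset.dvd_sum
      intro i _
      have : (p : ℤ) ^ (i + 1 + 1) = (p : ℤ) ^ 2 * (p : ℤ) ^ i := by ring
      rw [this]
      exact Dvd.dvd.mul_left (Dvd.intro _ rfl) _
    rw [heval] at hdvd
    have hd1 : (p : ℤ) ^ 2 ∣ χ.coeff 1 * (p : ℤ) := (dvd_add_right hsum).mp hdvd
    obtain ⟨t, ht⟩ := hd1
    apply hp2
    refine ⟨t, ?_⟩
    have hpne : (p : ℤ) ≠ 0 := by exact_mod_cast hp.ne_zero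
    have : χ.coeff 1 * (p : ℤ) = ((p : ℤ) * t) * (p : ℤ) := by rw [ht]; ring
    exact mul_right_cancel₀ hpne this
  -- Eisenstein for the primitive part
  set g := f.primPart with hgdef
  have hfg : f = Polynomial.C f.content * g := f.eq_C_content_mul_primPart
  have hcoeff_rel : ∀ j, f.coeff j = f.content * g.coeff j := by
    intro j
    conv_lhs => rw [hfg]
    rw [Polynomial.coeff_C_mul]
  have hgdeg : g.natDegree = n := by rw [hgdef, Polynomial.natDegree_primPart, hdeg]
  have hpcont : ¬ (p : ℤ) ∣ f.content := by
    intro h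
    exact hp1 (hcoeffn ▸ (hcoeff_rel n ▸ h.mul_right (g.coeff n)))
  have hgIrr : Irreducible g := by
    apply Polynomial.irreducible_of_eisenstein_criterion
      (P := Ideal.span {(p : ℤ)})
      ((Ideal.span_singleton_prime (by exact_mod_cast hp.ne_zero)).mpr hpZ)
    · -- leading coeff not in P
      rw [Ideal.mem_span_singleton]
      intro h
      rw [Polynomial.leadingCoeff, hgdeg] at h
      apply hp1
      rw [← hcoeffn, hcoeff_rel n]
      exact h.mul_left _
    · -- lower coeffs in P
      intro j hjd
      rw [Ideal.mem_span_singleton]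
      have hjn : j < n := by
        have hgne : g ≠ 0 := by
          intro h0
          rw [h0, mul_zero] at hfg
          exact hfne hfg
        rw [Polynomial.degree_eq_natDegree hgne, hgdeg] at hjd
        exact_mod_cast hjd
      have := hmemp j hjn
      rw [hcoeff_rel j] at this
      exact (hpZ.dvd_mul.mp this).resolve_left hpcont
    · -- positive degree
      have hgne : g ≠ 0 := by
        intro h0
        rw [h0, mul_zero] at hfg
        exact hfne hfg
      rw [Polynomial.degree_eq_natDegree hgne, hgdeg]
      exact_mod_cast hnpos
    · -- coeff 0 not in P^2
      rw [Ideal.span_singleton_pow, Ideal.mem_span_singleton]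
      intro h
      apply hchip2
      rw [← hcoeff0, hcoeff_rel 0]
      exact h.mul_left _
    · exact f.isPrimitive_primPart
  have hmapIrr : Irreducible (g.map (Int.castRingHom ℚ)) :=
    (Polynomial.IsPrimitive.Int.irreducible_iff_irreducible_map_cast
      f.isPrimitive_primPart).mp hgIrr
  rw [aeval_XG_eq]
  have hcont_ne : (f.content : ℚ) ≠ 0 := by
    have : f.content ≠ 0 := fun h => hfne (Polynomial.content_eq_zero_iff.mp h)
    exact_mod_cast this
  have hassoc : Associated (g.map (Int.castRingHom ℚ)) (f.map (Int.castRingHom ℚ)) := by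
    refine ⟨(Polynomial.isUnit_C.mpr (isUnit_iff_ne_zero.mpr hcont_ne)).unit, ?_⟩
    conv_rhs => rw [hfg]
    rw [Polynomial.map_mul, Polynomial.map_C]
    simp only [IsUnit.unit_spec]
    rw [mul_comm]
    rfl
  exact hassoc.irreducible hmapIrr
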